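/- Let T be a tree on n ≥ 2 vertices with positive real edge weights. Then the distance matrix D(T) has exactly 1 positive eigenvalue and n−1 negative eigenvalues, i.e., its inertia is (1, 0, n−1). -/

import Mathlib

open Matrix

/-- Number of positive eigenvalues (with multiplicity) of a real symmetric matrix. -/
noncomputable def posEig {n : ℕ} {A : Matrix (Fin n) (Fin n) ℝ} (hA : A.IsHermitian) : ℕ :=
  Nat.card {i : Fin n // 0 < hA.eigenvalues i}

noncomputable def zeroEig {n : ℕ} {A : Matrix (Fin n) (Fin n) ℝ} (hA : A.IsHermitian) : ℕ :=
  Nat.card {i : Fin n // hA.eigenvalues i = 0}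

noncomputable def negEig {n : ℕ} {A : Matrix (Fin n) (Fin n) ℝ} (hA : A.IsHermitian) : ℕ :=
  Nat.card {i : Fin n // hA.eigenvalues i < 0}

/-- Total weight of a walk: sum of weights of its edges. -/
noncomputable def walkWeight {V : Type*} {G : SimpleGraph V} (w : Sym2 V → ℝ)
    {u v : V} (p : G.Walk u v) : ℝ :=
  (p.edges.map w).sum

/-- Weighted shortest-path distance. -/
noncomputable def wdist {V : Type*} (G : SimpleGraph V) (w : Sym2 V → ℝ) (u v : V) : ℝ :=
  sInf {x | ∃ p : G.Walk u v, walkWeight w p = x}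

/-- The distance matrix of a weighted graph on `Fin n`. -/
noncomputable def distMatrix {n : ℕ} (G : SimpleGraph (Fin n)) (w : Sym2 (Fin n) → ℝ) :
    Matrix (Fin n) (Fin n) ℝ :=
  Matrix.of fun i j => wdist G w i j

section Aux
open SimpleGraph Finset
open scoped Classical RealInnerProductSpace

namespace TIA

variable {V : Type*} {T : SimpleGraph V}

/-- `u` and `v` are separated by removing the edge `e`. -/
def sep (T : SimpleGraph V) (e : Sym2 V) (u v : V) : Prop :=
  ¬ ((T.deleteEdges {e}).Reachable u v)

lemma path_unique (hT : T.IsTree) {u v : V} {p q : T.Walk u v}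
    (hp : p.IsPath) (hq : q.IsPath) : p = q := by
  have h := hT.existsUnique_path u v
  exact h.unique hp hq

lemma mem_path_edges_iff_sep [DecidableEq V] (hT : T.IsTree) {u v : V} {p : T.Walk u v} (hp : p.IsPath)
    {e : Sym2 V} (he : e ∈ T.edgeSet) : e ∈ p.edges ↔ sep T e u v := by
  constructor
  · intro hmem hreach
    obtain ⟨q⟩ := hreach
    have hqb : ((T.deleteEdges {e}).Walk u v) := q.bypass
    have hsub : ∀ f ∈ q.bypass.edges, f ∈ T.edgeSet := by
      intro f hf
      exact edgeSet_mono (deleteEdges_le {e}) (q.bypass.edges_subset_edgeSet hf)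
    set r := q.bypass.transfer T hsub with hr
    have hrp : r.IsPath := (q.bypass_isPath).transfer hsub
    have : r = p := path_unique hT hrp hp
    have hme : e ∈ r.edges := by rw [this]; exact hmem
    rw [Walk.edges_transfer] at hme
    have := q.bypass.edges_subset_edgeSet hme
    rw [edgeSet_deleteEdges] at this
    exact this.2 rfl
  · intro hs
    by_contra hmem
    exact hs ⟨p.toDeleteEdges {e} (fun f hf => by
      simp only [Set.mem_singleton_iff]
      rintro rfl; exact hmem hf)⟩

lemma sep_symm {e : Sym2 V} {u v : V} (h : sep T e u v) : sep T e v u :=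
  fun hr => h hr.symm

lemma walkWeight_nonneg {w : Sym2 V → ℝ} (hw : ∀ e ∈ T.edgeSet, 0 ≤ w e)
    {u v : V} (p : T.Walk u v) : 0 ≤ walkWeight w p := by
  apply List.sum_nonneg
  intro a ha
  obtain ⟨f, hf, rfl⟩ := List.mem_map.1 ha
  exact hw f (p.edges_subset_edgeSet hf)

lemma walkWeight_bypass_le [DecidableEq V] {w : Sym2 V → ℝ} (hw : ∀ e ∈ T.edgeSet, 0 ≤ w e)
    {u v : V} (p : T.Walk u v) : walkWeight w p.bypass ≤ walkWeight w p := by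
  have h1 : walkWeight w p.bypass = ∑ e ∈ p.bypass.edges.toFinset, w e :=
    (List.sum_toFinset w (p.bypass_isPath.isTrail.edges_nodup)).symm
  have h2 : ∑ e ∈ p.bypass.edges.toFinset, w e ≤ ∑ e ∈ p.edges.toFinset, w e := by
    apply Finset.sum_le_sum_of_subset_of_nonneg
    · intro e hee
      rw [List.mem_toFinset] at *
      exact p.edges_bypass_subset hee
    · intro e hee _
      exact hw e (p.edges_subset_edgeSet (List.mem_toFinset.1 hee))
  have h3 : ∑ e ∈ p.edges.toFinset, w e ≤ walkWeight w p := by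
    have hdt : p.edges.toFinset = p.edges.dedup.toFinset := by
      ext a; simp
    rw [hdt, List.sum_toFinset w (List.nodup_dedup _)]
    exact List.Sublist.sum_le_sum (List.Sublist.map w (List.dedup_sublist _))
      (fun a ha => by
        obtain ⟨f, hf, rfl⟩ := List.mem_map.1 ha
        exact hw f (p.edges_subset_edgeSet hf))
  linarith

lemma wdist_eq (hT : T.IsTree) {w : Sym2 V → ℝ} (hw : ∀ e ∈ T.edgeSet, 0 ≤ w e)
    {u v : V} {p : T.Walk u v} (hp : p.IsPath) : wdist T w u v = walkWeight w p := by
  classical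
  have lb : ∀ q : T.Walk u v, walkWeight w p ≤ walkWeight w q := by
    intro q
    have : p = q.bypass := path_unique hT hp q.bypass_isPath
    rw [this]
    exact walkWeight_bypass_le hw q
  apply le_antisymm
  · exact csInf_le ⟨walkWeight w p, fun x ⟨q, hq⟩ => hq ▸ lb q⟩ ⟨p, rfl⟩
  · exact le_csInf ⟨walkWeight w p, p, rfl⟩ (fun x ⟨q, hq⟩ => hq ▸ lb q)


lemma reach_endpoint_aux (hT : T.IsTree) {a b : V} (hab : T.Adj a b) {z c : V}
    (p : T.Walk z c) :
    ((T.deleteEdges {s(a,b)}).Reachable z a ∨ (T.deleteEdges {s(a,b)}).Reachable z b) ∨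
      (T.deleteEdges {s(a,b)}).Reachable z c := by
  induction p with
  | nil => exact Or.inr (Reachable.refl _)
  | @cons x y _ h q ih =>
    by_cases he : s(x, y) = s(a, b)
    · rw [Sym2.eq_iff] at he
      rcases he with ⟨rfl, rfl⟩ | ⟨rfl, rfl⟩
      · exact Or.inl (Or.inl (Reachable.refl _))
      · exact Or.inl (Or.inr (Reachable.refl _))
    · have hadj : (T.deleteEdges {s(a,b)}).Adj x y := by
        rw [deleteEdges_adj]
        exact ⟨h, by simpa using he⟩
      rcases ih with (hy | hy) | hy
      · exact Or.inl (Or.inl (hadj.reachable.trans hy))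
      · exact Or.inl (Or.inr (hadj.reachable.trans hy))
      · exact Or.inr (hadj.reachable.trans hy)

lemma reach_endpoint (hT : T.IsTree) {a b : V} (hab : T.Adj a b) (z : V) :
    (T.deleteEdges {s(a,b)}).Reachable z a ∨ (T.deleteEdges {s(a,b)}).Reachable z b := by
  obtain ⟨p⟩ := hT.isConnected.preconnected z a
  rcases reach_endpoint_aux hT hab p with h | h
  · exact h
  · exact Or.inl h

lemma not_reach_adj (hT : T.IsTree) {a b : V} (hab : T.Adj a b) :
    ¬ (T.deleteEdges {s(a,b)}).Reachable a b := by
  classical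
  intro hr
  obtain ⟨q⟩ := hr
  have hsub : ∀ f ∈ q.bypass.edges, f ∈ T.edgeSet := fun f hf =>
    edgeSet_mono (deleteEdges_le {s(a,b)}) (q.bypass.edges_subset_edgeSet hf)
  have hrp : (q.bypass.transfer T hsub).IsPath := (q.bypass_isPath).transfer hsub
  have hone : (Walk.cons hab Walk.nil : T.Walk a b).IsPath := by simp [hab.ne]
  have heq := path_unique hT hrp hone
  have : s(a,b) ∈ (q.bypass.transfer T hsub).edges := by
    rw [heq]; simp
  rw [Walk.edges_transfer] at this
  have := q.bypass.edges_subset_edgeSet this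
  rw [edgeSet_deleteEdges] at this
  exact this.2 rfl

lemma sep_iff (hT : T.IsTree) {a b : V} (hab : T.Adj a b) (u v : V) :
    sep T s(a,b) u v ↔
      (((T.deleteEdges {s(a,b)}).Reachable u a ∧ (T.deleteEdges {s(a,b)}).Reachable v b) ∨
       ((T.deleteEdges {s(a,b)}).Reachable u b ∧ (T.deleteEdges {s(a,b)}).Reachable v a)) := by
  set G := T.deleteEdges {s(a,b)} with hG
  have hnr : ¬ G.Reachable a b := not_reach_adj hT hab
  constructor
  · intro hs
    rcases reach_endpoint hT hab u with hu | hu <;> rcases reach_endpoint hT hab v with hv | hv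
    · exact absurd (hu.trans hv.symm) hs
    · exact Or.inl ⟨hu, hv⟩
    · exact Or.inr ⟨hu, hv⟩
    · exact absurd (hu.trans hv.symm) hs
  · rintro (⟨hu, hv⟩ | ⟨hu, hv⟩) hr
    · exact hnr ((hu.symm.trans hr).trans hv)
    · exact hnr ((hv.symm.trans hr.symm).trans hu)


lemma sep_irrefl {e : Sym2 V} (v : V) : ¬ sep T e v v := fun h => h (Reachable.refl v)

/-- the unique edge incident to `v` separating `u` from `v`. -/
lemma first_edge [DecidableEq V] (hT : T.IsTree) {u v : V} (hne : u ≠ v) :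
    ∃! e : Sym2 V, (e ∈ T.edgeSet ∧ v ∈ e) ∧ sep T e u v := by
  obtain ⟨p, hp, -⟩ := hT.existsUnique_path v u
  cases p with
  | nil => exact absurd rfl hne.symm
  | @cons _ y _ h q =>
    have hqp : q.IsPath ∧ v ∉ q.support := (Walk.cons_isPath_iff h q).1 hp
    refine ⟨s(v,y), ⟨⟨h, Sym2.mem_mk_left v y⟩, ?_⟩, ?_⟩
    · apply sep_symm
      rw [← mem_path_edges_iff_sep hT hp h]
      simp
    · rintro e ⟨⟨heE, hve⟩, hsep⟩
      have hmem : e ∈ (Walk.cons h q).edges :=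
        (mem_path_edges_iff_sep hT hp heE).2 (sep_symm hsep)
      rw [Walk.edges_cons, List.mem_cons] at hmem
      rcases hmem with rfl | hmem
      · rfl
      · exfalso
        induction e with
        | h c d =>
          rcases Sym2.mem_iff.1 hve with rfl | rfl
          · exact hqp.2 (q.fst_mem_support_of_mem_edges hmem)
          · exact hqp.2 (q.snd_mem_support_of_mem_edges hmem)


variable [Fintype V]

/-- The vertices on the `a`-side after deleting edge `s(a,b)`. -/
noncomputable def side (T : SimpleGraph V) (a b : V) : Finset V :=
  univ.filter (fun z => (T.deleteEdges {s(a,b)}).Reachable z a)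

lemma mem_side {a b z : V} :
    z ∈ side T a b ↔ (T.deleteEdges {s(a,b)}).Reachable z a := by
  simp [side]

lemma side_swap (hT : T.IsTree) {a b : V} (hab : T.Adj a b) :
    side T b a = (side T a b)ᶜ := by
  ext z
  simp only [mem_side, Finset.mem_compl]
  have hsw : s(b,a) = s(a,b) := Sym2.eq_swap
  rw [hsw]
  constructor
  · intro hzb hza
    exact not_reach_adj hT hab (hza.symm.trans hzb)
  · intro hza
    rcases reach_endpoint hT hab z with h | h
    · exact absurd h hza
    · exact h

lemma self_mem_side {a b : V} : a ∈ side T a b := mem_side.2 (Reachable.refl _)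

lemma sep_iff_mem (hT : T.IsTree) {a b : V} (hab : T.Adj a b) (u v : V) :
    sep T s(a,b) u v ↔
      ((u ∈ side T a b ∧ v ∈ side T b a) ∨ (u ∈ side T b a ∧ v ∈ side T a b)) := by
  have hsw : s(b,a) = s(a,b) := Sym2.eq_swap
  rw [sep_iff hT hab]
  simp only [mem_side, hsw]

/-- The inner double sum attached to an edge. -/
noncomputable def innerQ (T : SimpleGraph V) (e : Sym2 V) (x : V → ℝ) : ℝ :=
  ∑ u, ∑ v, if sep T e u v then x u * x v else 0

lemma innerQ_eq (hT : T.IsTree) {a b : V} (hab : T.Adj a b) (x : V → ℝ) :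
    innerQ T s(a,b) x =
      2 * (∑ z ∈ side T a b, x z) * (∑ z ∈ side T b a, x z) := by
  have hswap : side T b a = (side T a b)ᶜ := side_swap hT hab
  have hd : ∀ u, u ∈ side T a b → u ∉ side T b a := by
    intro u hu hB
    rw [hswap, Finset.mem_compl] at hB
    exact hB hu
  have hc : ∀ u, u ∉ side T a b → u ∈ side T b a := by
    intro u hu
    rw [hswap, Finset.mem_compl]
    exact hu
  have key : ∀ u, (∑ v, if sep T s(a,b) u v then x u * x v else 0) =
      if u ∈ side T a b then x u * ∑ z ∈ side T b a, x z
      else x u * ∑ z ∈ side T a b, x z := by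
    intro u
    by_cases hu : u ∈ side T a b
    · rw [if_pos hu, Finset.mul_sum, ← Finset.sum_filter]
      apply Finset.sum_congr
      · ext v
        simp only [Finset.mem_filter, Finset.mem_univ, true_and]
        rw [sep_iff_mem hT hab]
        constructor
        · rintro (⟨_, hv⟩ | ⟨hu', _⟩)
          · exact hv
          · exact absurd hu' (hd u hu)
        · intro hv; exact Or.inl ⟨hu, hv⟩
      · intros; rfl
    · rw [if_neg hu, Finset.mul_sum, ← Finset.sum_filter]
      apply Finset.sum_congr
      · ext v
        simp only [Finset.mem_filter, Finset.mem_univ, true_and]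
        rw [sep_iff_mem hT hab]
        constructor
        · rintro (⟨hu', _⟩ | ⟨_, hv⟩)
          · exact absurd hu' hu
          · exact hv
        · intro hv; exact Or.inr ⟨hc u hu, hv⟩
      · intros; rfl
  rw [innerQ]
  simp_rw [key]
  rw [Finset.sum_ite]
  have h1 : univ.filter (fun u => u ∈ side T a b) = side T a b := by ext z; simp
  have h2 : univ.filter (fun u => u ∉ side T a b) = side T b a := by
    ext z; simp [hswap]
  rw [h1, h2, ← Finset.sum_mul, ← Finset.sum_mul]
  ring


lemma side_sum_eq_zero (hT : T.IsTree) {a b : V} (hab : T.Adj a b) {x : V → ℝ}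
    (hsum : ∑ z, x z = 0) (hzero : innerQ T s(a,b) x = 0) :
    (∑ z ∈ side T a b, x z) = 0 ∧ (∑ z ∈ side T b a, x z) = 0 := by
  have hsplit : (∑ z ∈ side T a b, x z) + (∑ z ∈ side T b a, x z) = 0 := by
    rw [side_swap hT hab, Finset.sum_add_sum_compl]
    exact hsum
  rw [innerQ_eq hT hab] at hzero
  have h2 : (∑ z ∈ side T b a, x z) = -(∑ z ∈ side T a b, x z) := by linarith
  rw [h2] at hzero
  have : (∑ z ∈ side T a b, x z) = 0 := by nlinarith
  constructor
  · exact this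
  · rw [h2, this, neg_zero]

lemma farSum_eq_zero (hT : T.IsTree) {e : Sym2 V} (he : e ∈ T.edgeSet)
    {x : V → ℝ} (hsum : ∑ z, x z = 0) (hzero : innerQ T e x = 0) (v : V) :
    ∑ u ∈ univ.filter (fun u => sep T e u v), x u = 0 := by
  induction e with
  | h a b =>
    have hab : T.Adj a b := he
    obtain ⟨hA, hB⟩ := side_sum_eq_zero hT hab hsum hzero
    by_cases hv : v ∈ side T a b
    · have : univ.filter (fun u => sep T s(a,b) u v) = side T b a := by
        ext u
        simp only [Finset.mem_filter, Finset.mem_univ, true_and]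
        rw [sep_iff_mem hT hab]
        constructor
        · rintro (⟨hu, hv'⟩ | ⟨hu, _⟩)
          · exfalso
            rw [side_swap hT hab, Finset.mem_compl] at hv'
            exact hv' hv
          · exact hu
        · intro hu; exact Or.inr ⟨hu, hv⟩
      rw [this]; exact hB
    · have hv' : v ∈ side T b a := by
        rw [side_swap hT hab, Finset.mem_compl]; exact hv
      have : univ.filter (fun u => sep T s(a,b) u v) = side T a b := by
        ext u
        simp only [Finset.mem_filter, Finset.mem_univ, true_and]
        rw [sep_iff_mem hT hab]
        constructor
        · rintro (⟨hu, _⟩ | ⟨_, hv''⟩)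
          · exact hu
          · exact absurd hv'' hv
        · intro hu; exact Or.inl ⟨hu, hv'⟩
      rw [this]; exact hA

lemma kernel (hT : T.IsTree) {x : V → ℝ} (hsum : ∑ z, x z = 0)
    (hzero : ∀ e ∈ T.edgeFinset, innerQ T e x = 0) : x = 0 := by
  funext v
  have hbi : (T.edgeFinset.filter (fun e => v ∈ e)).biUnion
      (fun e => univ.filter (fun u => sep T e u v)) = univ.erase v := by
    ext u
    simp only [Finset.mem_biUnion, Finset.mem_filter, Finset.mem_univ, true_and,
      Finset.mem_erase, mem_edgeFinset]
    constructor
    · rintro ⟨e, ⟨-, -⟩, hsep⟩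
      refine ⟨fun h => ?_, trivial⟩
      subst h
      exact sep_irrefl _ hsep
    · rintro ⟨hne, -⟩
      obtain ⟨e, ⟨⟨heE, hve⟩, hsep⟩, -⟩ := first_edge hT hne
      exact ⟨e, ⟨heE, hve⟩, hsep⟩
  have hdisj : ∀ e₁ ∈ T.edgeFinset.filter (fun e => v ∈ e),
      ∀ e₂ ∈ T.edgeFinset.filter (fun e => v ∈ e), e₁ ≠ e₂ →
      Disjoint (univ.filter (fun u => sep T e₁ u v)) (univ.filter (fun u => sep T e₂ u v)) := by
    intro e₁ he₁ e₂ he₂ hne12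
    rw [Finset.disjoint_left]
    intro u hu1 hu2
    simp only [Finset.mem_filter, Finset.mem_univ, true_and] at hu1 hu2
    simp only [Finset.mem_filter, mem_edgeFinset] at he₁ he₂
    have hune : u ≠ v := by
      rintro rfl
      exact sep_irrefl _ hu1
    obtain ⟨e₀, -, huniq⟩ := first_edge hT hune
    exact hne12 ((huniq e₁ ⟨⟨he₁.1, he₁.2⟩, hu1⟩).trans (huniq e₂ ⟨⟨he₂.1, he₂.2⟩, hu2⟩).symm)
  have hsum2 : ∑ u ∈ univ.erase v, x u = 0 := by
    rw [← hbi, Finset.sum_biUnion]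
    · apply Finset.sum_eq_zero
      intro e he
      simp only [Finset.mem_filter] at he
      exact farSum_eq_zero hT (mem_edgeFinset.1 he.1) hsum (hzero e he.1) v
    · intro e₁ he₁ e₂ he₂ hne12
      exact hdisj e₁ he₁ e₂ he₂ hne12
  have := Finset.add_sum_erase univ x (Finset.mem_univ v)
  rw [hsum2, add_zero] at this
  rw [← this] at hsum
  exact hsum


lemma wdist_eq_sum (hT : T.IsTree) {w : Sym2 V → ℝ} (hw : ∀ e ∈ T.edgeSet, 0 ≤ w e)
    (u v : V) :
    wdist T w u v = ∑ e ∈ T.edgeFinset, if sep T e u v then w e else 0 := by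
  obtain ⟨p, hp, -⟩ := hT.existsUnique_path u v
  rw [wdist_eq hT hw hp, walkWeight,
    ← List.sum_toFinset w hp.isTrail.edges_nodup]
  have hfil : p.edges.toFinset = T.edgeFinset.filter (fun e => sep T e u v) := by
    ext e
    simp only [List.mem_toFinset, Finset.mem_filter, mem_edgeFinset]
    constructor
    · intro he
      have heE := p.edges_subset_edgeSet he
      exact ⟨heE, (mem_path_edges_iff_sep hT hp heE).1 he⟩
    · rintro ⟨heE, hsep⟩
      exact (mem_path_edges_iff_sep hT hp heE).2 hsep
  rw [hfil, Finset.sum_filter]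

lemma quad_eq (hT : T.IsTree) {w : Sym2 V → ℝ} (hw : ∀ e ∈ T.edgeSet, 0 ≤ w e)
    (x : V → ℝ) :
    x ⬝ᵥ ((Matrix.of fun i j => wdist T w i j) *ᵥ x)
      = ∑ e ∈ T.edgeFinset, w e * innerQ T e x := by
  have h0 : x ⬝ᵥ ((Matrix.of fun i j => wdist T w i j) *ᵥ x)
      = ∑ u, ∑ v, x u * (wdist T w u v * x v) := by
    simp [dotProduct, Matrix.mulVec, Finset.mul_sum]
  rw [h0]
  simp_rw [wdist_eq_sum hT hw, Finset.sum_mul, Finset.mul_sum, ite_mul, zero_mul,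
    mul_ite, mul_zero]
  have h1 : ∀ u : V, (∑ v : V, ∑ e ∈ T.edgeFinset,
        if sep T e u v then x u * (w e * x v) else 0)
      = ∑ e ∈ T.edgeFinset, ∑ v : V,
        if sep T e u v then x u * (w e * x v) else 0 := fun u => Finset.sum_comm
  simp_rw [h1]
  rw [Finset.sum_comm]
  refine Finset.sum_congr rfl fun e he => ?_
  rw [innerQ, Finset.mul_sum]
  refine Finset.sum_congr rfl fun u _ => ?_
  rw [Finset.mul_sum]
  refine Finset.sum_congr rfl fun v _ => ?_
  rw [mul_ite, mul_zero]
  split_ifs with h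
  · ring
  · rfl

lemma quad_pos_one (hT : T.IsTree) {w : Sym2 V → ℝ} (hw : ∀ e ∈ T.edgeSet, 0 < w e)
    (hcard : 2 ≤ Fintype.card V) :
    0 < ∑ e ∈ T.edgeFinset, w e * innerQ T e (fun _ => 1) := by
  apply Finset.sum_pos
  · intro e he
    have heE := mem_edgeFinset.1 he
    induction e with
    | h a b =>
      have hab : T.Adj a b := heE
      apply mul_pos (hw _ heE)
      rw [innerQ_eq hT hab]
      simp only [Finset.sum_const, nsmul_eq_mul, mul_one]
      have h1 : (0:ℝ) < (side T a b).card := by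
        have : (side T a b).Nonempty := ⟨a, self_mem_side⟩
        exact_mod_cast Finset.card_pos.2 this
      have h2 : (0:ℝ) < (side T b a).card := by
        have : (side T b a).Nonempty := ⟨b, self_mem_side⟩
        exact_mod_cast Finset.card_pos.2 this
      positivity
  · rw [← Finset.card_pos]
    have := hT.card_edgeFinset
    omega

lemma quad_neg (hT : T.IsTree) {w : Sym2 V → ℝ} (hw : ∀ e ∈ T.edgeSet, 0 < w e)
    {x : V → ℝ} (hsum : ∑ z, x z = 0) (hx : x ≠ 0) :
    ∑ e ∈ T.edgeFinset, w e * innerQ T e x < 0 := by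
  have hterm : ∀ e ∈ T.edgeFinset, w e * innerQ T e x ≤ 0 := by
    intro e he
    have heE := mem_edgeFinset.1 he
    induction e with
    | h a b =>
      have hab : T.Adj a b := heE
      have hS : (∑ z ∈ side T a b, x z) + (∑ z ∈ side T b a, x z) = 0 := by
        rw [side_swap hT hab, Finset.sum_add_sum_compl]
        exact hsum
      have h2 : (∑ z ∈ side T b a, x z) = -(∑ z ∈ side T a b, x z) := by linarith
      have : innerQ T s(a,b) x ≤ 0 := by
        rw [innerQ_eq hT hab, h2]
        nlinarith [sq_nonneg (∑ z ∈ side T a b, x z)]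
      exact mul_nonpos_of_nonneg_of_nonpos (le_of_lt (hw _ heE)) this
  have hle : ∑ e ∈ T.edgeFinset, w e * innerQ T e x ≤ 0 := Finset.sum_nonpos hterm
  rcases lt_or_eq_of_le hle with h | h
  · exact h
  · exfalso
    have hall := (Finset.sum_eq_zero_iff_of_nonpos hterm).1 h
    apply hx
    apply kernel hT hsum
    intro e he
    have := hall e he
    have hwpos := hw e (mem_edgeFinset.1 he)
    rcases mul_eq_zero.1 this with h' | h'
    · exact absurd h' (ne_of_gt hwpos)
    · exact h'


end TIA

namespace TIA

variable {n : ℕ} {A : Matrix (Fin n) (Fin n) ℝ} (hA : A.IsHermitian)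

lemma eigen_apply (i : Fin n) :
    Matrix.toEuclideanLin A (hA.eigenvectorBasis i) =
      hA.eigenvalues i • hA.eigenvectorBasis i := by
  ext j
  exact congrFun (hA.mulVec_eigenvectorBasis i) j

lemma qf (x : EuclideanSpace ℝ (Fin n)) :
    x ⬝ᵥ (A *ᵥ x) = ∑ i, hA.eigenvalues i * (hA.eigenvectorBasis.repr x i)^2 := by
  set b := hA.eigenvectorBasis with hb
  have h0 : x ⬝ᵥ (A *ᵥ x) = (inner ℝ x (Matrix.toEuclideanLin A x) : ℝ) := by
    rw [PiLp.inner_apply]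
    simp only [RCLike.inner_apply, starRingEnd_apply, star_trivial]
    rw [dotProduct]
    refine Finset.sum_congr rfl fun j _ => ?_
    rw [mul_comm]
    rfl
  rw [h0]
  conv_lhs => rw [← b.sum_repr x, map_sum]
  rw [inner_sum]
  refine Finset.sum_congr rfl fun i _ => ?_
  rw [_root_.map_smul, eigen_apply hA i, inner_smul_right, real_inner_smul_right,
    b.sum_repr x, real_inner_comm, ← b.repr_apply_apply]
  ring

noncomputable def Wpos (hA : A.IsHermitian) : Submodule ℝ (EuclideanSpace ℝ (Fin n)) :=
  Submodule.span ℝ (Set.range (fun i : {i // 0 ≤ hA.eigenvalues i} =>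
    (hA.eigenvectorBasis i : EuclideanSpace ℝ (Fin n))))

lemma finrank_Wpos :
    Module.finrank ℝ (Wpos hA) = Fintype.card {i // 0 ≤ hA.eigenvalues i} := by
  apply finrank_span_eq_card
  exact hA.eigenvectorBasis.orthonormal.linearIndependent.comp _ Subtype.val_injective

lemma repr_eq_zero_of_mem_Wpos {x : EuclideanSpace ℝ (Fin n)} (hx : x ∈ Wpos hA)
    {j : Fin n} (hj : hA.eigenvalues j < 0) : hA.eigenvectorBasis.repr x j = 0 := by
  set b := hA.eigenvectorBasis with hb
  rw [b.repr_apply_apply]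
  induction hx using Submodule.span_induction with
  | mem y hy =>
    obtain ⟨i, rfl⟩ := hy
    have hne : j ≠ (i : Fin n) := by
      rintro rfl
      exact absurd i.2 (not_le.2 hj)
    have := orthonormal_iff_ite.1 b.orthonormal j i
    rw [this, if_neg hne]
  | zero => exact inner_zero_right _
  | add y z _ _ hy hz => rw [inner_add_right, hy, hz, add_zero]
  | smul c y _ hy => rw [inner_smul_right, hy, mul_zero]

lemma q_nonneg_of_mem_Wpos {x : EuclideanSpace ℝ (Fin n)} (hx : x ∈ Wpos hA) :
    0 ≤ x ⬝ᵥ (A *ᵥ x) := by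
  rw [qf hA x]
  apply Finset.sum_nonneg
  intro i _
  by_cases hi : 0 ≤ hA.eigenvalues i
  · exact mul_nonneg hi (sq_nonneg _)
  · rw [repr_eq_zero_of_mem_Wpos hA hx (not_le.1 hi)]
    simp

noncomputable def sumL (n : ℕ) : EuclideanSpace ℝ (Fin n) →ₗ[ℝ] ℝ where
  toFun x := ∑ i, x i
  map_add' x y := by
    show ∑ i, (x i + y i) = _
    rw [Finset.sum_add_distrib]
  map_smul' c x := by
    show ∑ i, c * x i = c * ∑ i, x i
    rw [Finset.mul_sum]

lemma finrank_ker_sumL (hn : 2 ≤ n) :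
    Module.finrank ℝ (LinearMap.ker (sumL n)) = n - 1 := by
  have htot := (sumL n).finrank_range_add_finrank_ker
  rw [finrank_euclideanSpace_fin] at htot
  have hle : Module.finrank ℝ (LinearMap.range (sumL n)) ≤ 1 := by
    simpa using Submodule.finrank_le (LinearMap.range (sumL n))
  have hne : Module.finrank ℝ (LinearMap.range (sumL n)) ≠ 0 := by
    intro h0
    have hbot := Submodule.finrank_eq_zero.1 h0
    have hmem : ((n : ℝ)) ∈ LinearMap.range (sumL n) := by
      refine ⟨WithLp.toLp 2 (fun _ => 1), ?_⟩
      show ∑ _i : Fin n, (1:ℝ) = n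
      simp
    rw [hbot] at hmem
    have h1 : (n : ℝ) = 0 := hmem
    have h2 : (n : ℝ) ≠ 0 := Nat.cast_ne_zero.2 (by omega)
    exact h2 h1
  omega

lemma inertia_of_quadratic (hn : 2 ≤ n)
    (hpos : 0 < (fun _ => (1:ℝ)) ⬝ᵥ (A *ᵥ (fun _ => (1:ℝ))))
    (hneg : ∀ x : Fin n → ℝ, ∑ i, x i = 0 → x ≠ 0 → x ⬝ᵥ (A *ᵥ x) < 0) :
    posEig hA = 1 ∧ zeroEig hA = 0 ∧ negEig hA = n - 1 := by
  have hcard_pos : posEig hA = (univ.filter (fun i => 0 < hA.eigenvalues i)).card := by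
    rw [posEig, Nat.card_eq_fintype_card, Fintype.card_subtype]
  have hcard_zero : zeroEig hA = (univ.filter (fun i => hA.eigenvalues i = 0)).card := by
    rw [zeroEig, Nat.card_eq_fintype_card, Fintype.card_subtype]
  have hcard_neg : negEig hA = (univ.filter (fun i => hA.eigenvalues i < 0)).card := by
    rw [negEig, Nat.card_eq_fintype_card, Fintype.card_subtype]
  have hinf : LinearMap.ker (sumL n) ⊓ Wpos hA = ⊥ := by
    rw [Submodule.eq_bot_iff]
    rintro x ⟨hk, hp⟩
    by_contra hx0
    have hk' : ∑ i, x i = 0 := hk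
    have h1 : x ⬝ᵥ (A *ᵥ x) < 0 := hneg x hk' (fun h => hx0 ((WithLp.ofLp_eq_zero 2).1 h))
    exact absurd h1 (not_lt.2 (q_nonneg_of_mem_Wpos hA hp))
  have hdim := Submodule.finrank_sup_add_finrank_inf_eq (LinearMap.ker (sumL n)) (Wpos hA)
  rw [hinf, finrank_bot, finrank_ker_sumL hn, finrank_Wpos] at hdim
  have hsup_le : Module.finrank ℝ ↥(LinearMap.ker (sumL n) ⊔ Wpos hA) ≤ n := by
    have := Submodule.finrank_le (LinearMap.ker (sumL n) ⊔ Wpos hA)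
    rwa [finrank_euclideanSpace_fin] at this
  have hNN : Fintype.card {i // 0 ≤ hA.eigenvalues i} ≤ 1 := by omega
  have hP1 : 1 ≤ (univ.filter (fun i => 0 < hA.eigenvalues i)).card := by
    by_contra h
    push_neg at h
    have hall : ∀ i, hA.eigenvalues i ≤ 0 := by
      intro i
      by_contra hi
      push_neg at hi
      have hmem : i ∈ univ.filter (fun i => 0 < hA.eigenvalues i) := by
        simp [hi]
      have := Finset.card_pos.2 ⟨i, hmem⟩
      omega
    have hle : (fun _ => (1:ℝ)) ⬝ᵥ (A *ᵥ fun _ => (1:ℝ)) ≤ 0 := by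
      rw [← WithLp.ofLp_toLp 2 (fun _ => (1:ℝ)), qf hA]
      apply Finset.sum_nonpos
      intro i _
      exact mul_nonpos_of_nonpos_of_nonneg (hall i) (sq_nonneg _)
    linarith
  have hsplit : Fintype.card {i // 0 ≤ hA.eigenvalues i}
      = (univ.filter (fun i => 0 < hA.eigenvalues i)).card
        + (univ.filter (fun i => hA.eigenvalues i = 0)).card := by
    rw [Fintype.card_subtype]
    have hcup : univ.filter (fun i => 0 ≤ hA.eigenvalues i)
        = univ.filter (fun i => 0 < hA.eigenvalues i)
          ∪ univ.filter (fun i => hA.eigenvalues i = 0) := by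
      rw [← Finset.filter_or]
      apply Finset.filter_congr
      intro i _
      constructor
      · intro h
        rcases lt_or_eq_of_le h with h | h
        · exact Or.inl h
        · exact Or.inr h.symm
      · rintro (h | h)
        · exact le_of_lt h
        · exact le_of_eq h.symm
    rw [hcup, Finset.card_union_of_disjoint]
    rw [Finset.disjoint_left]
    intro i h1 h2
    simp only [Finset.mem_filter, Finset.mem_univ, true_and] at h1 h2
    rw [h2] at h1
    exact lt_irrefl 0 h1
  have htotal : (univ.filter (fun i => hA.eigenvalues i < 0)).card
      + Fintype.card {i // 0 ≤ hA.eigenvalues i} = n := by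
    rw [Fintype.card_subtype]
    have hcongr : univ.filter (fun i => ¬ hA.eigenvalues i < 0)
        = univ.filter (fun i => 0 ≤ hA.eigenvalues i) := by
      apply Finset.filter_congr
      intro i _
      exact not_lt
    rw [← hcongr]
    have := Finset.card_filter_add_card_filter_not
      (s := (univ : Finset (Fin n))) (p := fun i => hA.eigenvalues i < 0)
    rw [Finset.card_univ, Fintype.card_fin] at this
    exact this
  refine ⟨by omega, by omega, by omega⟩


end TIA

end Aux

/-- The distance matrix of a weighted tree on `n ≥ 2` vertices with
positive edge weights has inertia `(1, 0, n-1)`. -/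
theorem tree_inertia (n : ℕ) (hn : 2 ≤ n) (T : SimpleGraph (Fin n)) (hT : T.IsTree)
    (w : Sym2 (Fin n) → ℝ) (hw : ∀ e ∈ T.edgeSet, 0 < w e)
    (hD : (distMatrix T w).IsHermitian) :
    posEig hD = 1 ∧ zeroEig hD = 0 ∧ negEig hD = n - 1 := by
  classical
  have hw0 : ∀ e ∈ T.edgeSet, 0 ≤ w e := fun e he => (hw e he).le
  have hmat : distMatrix T w = Matrix.of fun i j => wdist T w i j := rfl
  apply TIA.inertia_of_quadratic hD hn
  · rw [hmat, TIA.quad_eq hT hw0]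
    apply TIA.quad_pos_one hT hw
    simpa using hn
  · intro x hs hx
    rw [hmat, TIA.quad_eq hT hw0]
    exact TIA.quad_neg hT hw hs hx
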